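/- arXiv:2406.01366 — 3 statements merged into one kernel-verified Lean document; each statement's English description precedes it below -/
import Mathlib

section
/- With the data and maps D₄, D₃ as in the context: D₃ ∘ D₄ = 0, D₄ is injective, and the kernel of D₃ is a ℚ-vector space of dimension a + b (equivalently, the rank of D₃ equals 3 + a). -/
/-- Index set for the basis of `W = ℚ^(3+2a+b)`: the three basis vectors `x, y, z`,
then `p_1, …, p_a`, then `q_1, …, q_a`, then `r_1, …, r_b`. -/
abbrev WIdx (a b : ℕ) : Type := (Fin 3 ⊕ Fin a) ⊕ (Fin a ⊕ Fin b)

/-- Index set for the basis of `U = ℚ^(1+3a+2b)`: the basis vector `w`, then the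
`s_{i,k}` (`i ∈ Fin a`, `k ∈ Fin 3`), then the `t_{j,k}` (`j ∈ Fin b`, `k ∈ Fin 2`). -/
abbrev UIdx (a b : ℕ) : Type := Unit ⊕ ((Fin a × Fin 3) ⊕ (Fin b × Fin 2))

/-- The matrix of the cellular boundary operator `∂₄ : ℚ³ → W` of the CW structure on
the link of a point of the 0-dimensional stratum of a complex 3-dimensional toric
variety: the `x`-, `y`-, `z`-rows vanish, the `p_i`- and `q_i`-rows are
`(n_i, m_i, l_i)`, and the `r_j`-rows are `(n'_j, m'_j, 0)`. -/
def M4 (a b : ℕ) (n m l : Fin a → ℤ) (n' m' : Fin b → ℤ) :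
    Matrix (WIdx a b) (Fin 3) ℚ := fun i =>
  match i with
  | .inl (.inl _) => 0
  | .inl (.inr i) => ![((n i : ℤ) : ℚ), ((m i : ℤ) : ℚ), ((l i : ℤ) : ℚ)]
  | .inr (.inl i) => ![((n i : ℤ) : ℚ), ((m i : ℤ) : ℚ), ((l i : ℤ) : ℚ)]
  | .inr (.inr j) => ![((n' j : ℤ) : ℚ), ((m' j : ℤ) : ℚ), 0]

/-- The matrix of the cellular boundary operator `∂₃ : W → U`: the `w`-row vanishes;
the `s_{i,1}`-row has `m_i·l_i` at `x`, `1` at `p_i`, `-1` at `q_i`;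
the `s_{i,2}`-row has `n_i·l_i` at `y`, `1` at `p_i`, `-1` at `q_i`;
the `s_{i,3}`-row has `n_i·m_i` at `z`, `1` at `p_i`, `-1` at `q_i`;
the `t_{j,1}`-row has `-m'_j` at `x`; the `t_{j,2}`-row has `n'_j` at `y`. -/
def M3 (a b : ℕ) (n m l : Fin a → ℤ) (n' m' : Fin b → ℤ) :
    Matrix (UIdx a b) (WIdx a b) ℚ := fun i j =>
  match i, j with
  | .inl _, _ => 0
  | .inr (.inl (i, k)), .inl (.inl c) =>
      if c = k then ![((m i * l i : ℤ) : ℚ), ((n i * l i : ℤ) : ℚ), ((n i * m i : ℤ) : ℚ)] k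
      else 0
  | .inr (.inl (i, _)), .inl (.inr i') => if i' = i then 1 else 0
  | .inr (.inl (i, _)), .inr (.inl i') => if i' = i then -1 else 0
  | .inr (.inl _), .inr (.inr _) => 0
  | .inr (.inr (j, k)), .inl (.inl c) =>
      if k = 0 ∧ c = 0 then -((m' j : ℤ) : ℚ)
      else if k = 1 ∧ c = 1 then ((n' j : ℤ) : ℚ) else 0
  | .inr (.inr _), _ => 0

/-- The inclusion of the `(p,q,r)` coordinates with `p = q`. -/
def Phi (a b : ℕ) : ((Fin a → ℚ) × (Fin b → ℚ)) →ₗ[ℚ] (WIdx a b → ℚ) where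
  toFun v := fun idx =>
    match idx with
    | .inl (.inl _) => 0
    | .inl (.inr i) => v.1 i
    | .inr (.inl i) => v.1 i
    | .inr (.inr j) => v.2 j
  map_add' u v := funext fun idx => by
    rcases idx with (c | i) | (i | j) <;> simp
  map_smul' c v := funext fun idx => by
    rcases idx with (c' | i) | (i | j) <;> simp

lemma Phi_injective (a b : ℕ) : Function.Injective (Phi a b) := by
  rw [← LinearMap.ker_eq_bot, LinearMap.ker_eq_bot']
  intro v hv
  have h1 : ∀ i : Fin a, v.1 i = 0 := fun i => congrFun hv (.inl (.inr i))
  have h2 : ∀ j : Fin b, v.2 j = 0 := fun j => congrFun hv (.inr (.inr j))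
  exact Prod.ext (funext h1) (funext h2)

lemma keyXYZ (a b : ℕ) (n m l : Fin a → ℤ) (n' m' : Fin b → ℤ)
    (hn : ∀ i, n i ≠ 0) (hm : ∀ i, m i ≠ 0) (hl : ∀ i, l i ≠ 0)
    (hnm' : ∀ j, ¬(n' j = 0 ∧ m' j = 0))
    (hspan : Submodule.span ℚ
        ((Set.range fun i => ![((n i : ℤ) : ℚ), ((m i : ℤ) : ℚ), ((l i : ℤ) : ℚ)]) ∪
          (Set.range fun j => ![((n' j : ℤ) : ℚ), ((m' j : ℤ) : ℚ), 0])) = ⊤)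
    (X Y Z : ℚ)
    (h1 : ∀ i, ((m i : ℚ) * (l i : ℚ)) * X = ((n i : ℚ) * (l i : ℚ)) * Y)
    (h2 : ∀ i, ((n i : ℚ) * (l i : ℚ)) * Y = ((n i : ℚ) * (m i : ℚ)) * Z)
    (h3 : ∀ j, ((m' j : ℤ) : ℚ) * X = 0)
    (h4 : ∀ j, ((n' j : ℤ) : ℚ) * Y = 0) :
    X = 0 ∧ Y = 0 ∧ Z = 0 := by
  have hnQ : ∀ i, ((n i : ℤ) : ℚ) ≠ 0 := fun i => Int.cast_ne_zero.mpr (hn i)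
  have hmQ : ∀ i, ((m i : ℤ) : ℚ) ≠ 0 := fun i => Int.cast_ne_zero.mpr (hm i)
  have hlQ : ∀ i, ((l i : ℤ) : ℚ) ≠ 0 := fun i => Int.cast_ne_zero.mpr (hl i)
  -- a ≥ 1
  have ha : a ≠ 0 := by
    rintro rfl
    have hle : Submodule.span ℚ
        ((Set.range fun i : Fin 0 => ![((n i : ℤ) : ℚ), ((m i : ℤ) : ℚ), ((l i : ℤ) : ℚ)]) ∪
          (Set.range fun j => ![((n' j : ℤ) : ℚ), ((m' j : ℤ) : ℚ), 0])) ≤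
        LinearMap.ker (LinearMap.proj (R := ℚ) (φ := fun _ : Fin 3 => ℚ) 2) := by
      rw [Submodule.span_le]
      rintro v (⟨i, rfl⟩ | ⟨j, rfl⟩)
      · exact i.elim0
      · simp [LinearMap.mem_ker]
    rw [hspan, top_le_iff, LinearMap.ker_eq_top] at hle
    have := congrFun (congrArg DFunLike.coe hle) ![0, 0, 1]
    simp at this
  obtain ⟨i0⟩ : Nonempty (Fin a) := ⟨⟨0, Nat.pos_of_ne_zero ha⟩⟩
  -- cancelled relations
  have hMX : ∀ i, ((m i : ℤ) : ℚ) * X = ((n i : ℤ) : ℚ) * Y := by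
    intro i
    have h : (((m i : ℤ) : ℚ) * X - ((n i : ℤ) : ℚ) * Y) * ((l i : ℤ) : ℚ) = 0 := by
      linear_combination h1 i
    rcases mul_eq_zero.mp h with h | h
    · linarith [h]
    · exact absurd h (hlQ i)
  have hLX : ∀ i, ((l i : ℤ) : ℚ) * X = ((n i : ℤ) : ℚ) * Z := by
    intro i
    have h : (((l i : ℤ) : ℚ) * X - ((n i : ℤ) : ℚ) * Z) * ((m i : ℤ) : ℚ) = 0 := by
      linear_combination h1 i + h2 i
    rcases mul_eq_zero.mp h with h | h
    · linarith [h]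
    · exact absurd h (hmQ i)
  have hX : X = 0 := by
    by_contra hX
    -- every b-index gives a contradiction
    have hj : ∀ j : Fin b, False := by
      intro j
      have hm'0 : ((m' j : ℤ) : ℚ) = 0 := by
        rcases mul_eq_zero.mp (h3 j) with h | h
        · exact h
        · exact absurd h hX
      have hn'0 : n' j ≠ 0 := fun h => hnm' j ⟨h, Int.cast_injective hm'0⟩
      have hY : Y = 0 := by
        rcases mul_eq_zero.mp (h4 j) with h | h
        · exact absurd h (Int.cast_ne_zero.mpr hn'0)
        · exact h
      have : ((m i0 : ℤ) : ℚ) * X = 0 := by rw [hMX i0, hY, mul_zero]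
      rcases mul_eq_zero.mp this with h | h
      · exact hmQ i0 h
      · exact hX h
    -- all generators lie on the line through (X, Y, Z)
    have hline : Submodule.span ℚ
        ((Set.range fun i => ![((n i : ℤ) : ℚ), ((m i : ℤ) : ℚ), ((l i : ℤ) : ℚ)]) ∪
          (Set.range fun j => ![((n' j : ℤ) : ℚ), ((m' j : ℤ) : ℚ), 0])) ≤
        Submodule.span ℚ {![X, Y, Z]} := by
      rw [Submodule.span_le]
      rintro v (⟨i, rfl⟩ | ⟨j, rfl⟩)
      · refine (Submodule.mem_span_singleton).mpr ⟨((n i : ℤ) : ℚ) / X, ?_⟩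
        funext c
        fin_cases c
        · show ((n i : ℤ) : ℚ) / X * X = ((n i : ℤ) : ℚ)
          field_simp
        · show ((n i : ℤ) : ℚ) / X * Y = ((m i : ℤ) : ℚ)
          field_simp
          linear_combination -hMX i
        · show ((n i : ℤ) : ℚ) / X * Z = ((l i : ℤ) : ℚ)
          field_simp
          linear_combination -hLX i
      · exact (hj j).elim
    rw [hspan, top_le_iff] at hline
    have hmem : (![0, 1, 0] : Fin 3 → ℚ) ∈ Submodule.span ℚ {![X, Y, Z]} := by
      rw [hline]; exact Submodule.mem_top
    obtain ⟨c, hc⟩ := Submodule.mem_span_singleton.mp hmem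
    have hc0 : c * X = 0 := by simpa using congrFun hc 0
    have hc1 : c * Y = 1 := by simpa using congrFun hc 1
    rcases mul_eq_zero.mp hc0 with h | h
    · rw [h, zero_mul] at hc1; exact zero_ne_one hc1
    · exact hX h
  refine ⟨hX, ?_, ?_⟩
  · have : ((n i0 : ℤ) : ℚ) * Y = 0 := by rw [← hMX i0, hX, mul_zero]
    rcases mul_eq_zero.mp this with h | h
    · exact absurd h (hnQ i0)
    · exact h
  · have : ((n i0 : ℤ) : ℚ) * Z = 0 := by rw [← hLX i0, hX, mul_zero]
    rcases mul_eq_zero.mp this with h | h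
    · exact absurd h (hnQ i0)
    · exact h

lemma M3_mulVec_s (a b : ℕ) (n m l : Fin a → ℤ) (n' m' : Fin b → ℤ)
    (w : WIdx a b → ℚ) (i : Fin a) (k : Fin 3) :
    (Matrix.mulVec (M3 a b n m l n' m') w) (.inr (.inl (i, k))) =
      ![((m i * l i : ℤ) : ℚ), ((n i * l i : ℤ) : ℚ), ((n i * m i : ℤ) : ℚ)] k *
        w (.inl (.inl k)) + w (.inl (.inr i)) - w (.inr (.inl i)) := by
  simp [Matrix.mulVec, dotProduct, M3, Fintype.sum_sum_type, ite_mul,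
    Finset.sum_ite_eq', neg_mul]
  ring

lemma M3_mulVec_t (a b : ℕ) (n m l : Fin a → ℤ) (n' m' : Fin b → ℤ)
    (w : WIdx a b → ℚ) (j : Fin b) (k : Fin 2) :
    (Matrix.mulVec (M3 a b n m l n' m') w) (.inr (.inr (j, k))) =
      if k = 0 then -((m' j : ℤ) : ℚ) * w (.inl (.inl 0))
      else ((n' j : ℤ) : ℚ) * w (.inl (.inl 1)) := by
  fin_cases k <;>
    simp [M3, Matrix.mulVec, dotProduct, Fintype.sum_sum_type, Fin.sum_univ_three]

/-- The cellular boundary operators `∂₄` and `∂₃` of the link of a point of the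
0-dimensional stratum of a complex 3-dimensional toric variety satisfy
`∂₃ ∘ ∂₄ = 0`, `∂₄` is injective, and `ker ∂₃` has dimension `a + b`. -/
theorem stmt6 (a b : ℕ) (n m l : Fin a → ℤ) (n' m' : Fin b → ℤ)
    (hn : ∀ i, n i ≠ 0) (hm : ∀ i, m i ≠ 0) (hl : ∀ i, l i ≠ 0)
    (hnm' : ∀ j, ¬(n' j = 0 ∧ m' j = 0))
    (hspan : Submodule.span ℚ
        ((Set.range fun i => ![((n i : ℤ) : ℚ), ((m i : ℤ) : ℚ), ((l i : ℤ) : ℚ)]) ∪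
          (Set.range fun j => ![((n' j : ℤ) : ℚ), ((m' j : ℤ) : ℚ), 0])) = ⊤) :
    Matrix.toLin' (M3 a b n m l n' m') ∘ₗ Matrix.toLin' (M4 a b n m l n' m') = 0 ∧
    Function.Injective (Matrix.toLin' (M4 a b n m l n' m')) ∧
    Module.finrank ℚ (LinearMap.ker (Matrix.toLin' (M3 a b n m l n' m'))) = a + b := by
  refine ⟨?_, ?_, ?_⟩
  · -- ∂₃ ∘ ∂₄ = 0
    have hmul : M3 a b n m l n' m' * M4 a b n m l n' m' = 0 := by
      ext u c
      simp only [Matrix.mul_apply, Fintype.sum_sum_type, Matrix.zero_apply]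
      rcases u with u | ⟨⟨i, k⟩ | ⟨j, k⟩⟩
      · simp [M3]
      · simp [M3, M4, Fin.sum_univ_three, ite_mul, Finset.sum_ite_eq']
      · simp [M3, M4, Fin.sum_univ_three, ite_mul, Finset.sum_ite_eq']
    rw [← Matrix.toLin'_mul, hmul, map_zero]
  · -- ∂₄ injective
    rw [← LinearMap.ker_eq_bot, LinearMap.ker_eq_bot']
    intro x hx
    rw [Matrix.toLin'_apply] at hx
    set f : (Fin 3 → ℚ) →ₗ[ℚ] ℚ :=
      { toFun := fun v => dotProduct v x
        map_add' := fun u v => add_dotProduct u v x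
        map_smul' := fun c v => smul_dotProduct c v x } with hf
    have hker : Submodule.span ℚ
        ((Set.range fun i => ![((n i : ℤ) : ℚ), ((m i : ℤ) : ℚ), ((l i : ℤ) : ℚ)]) ∪
          (Set.range fun j => ![((n' j : ℤ) : ℚ), ((m' j : ℤ) : ℚ), 0])) ≤ LinearMap.ker f := by
      rw [Submodule.span_le]
      rintro v (⟨i, rfl⟩ | ⟨j, rfl⟩) <;> simp only [LinearMap.mem_ker, SetLike.mem_coe]
      · exact congrFun hx (.inl (.inr i))
      · exact congrFun hx (.inr (.inr j))
    rw [hspan, top_le_iff, LinearMap.ker_eq_top] at hker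
    funext c
    have := congrFun (congrArg DFunLike.coe hker) (Pi.single c 1)
    simp only [hf, LinearMap.coe_mk, AddHom.coe_mk, LinearMap.zero_apply,
      single_dotProduct, one_mul] at this
    exact this
  · -- kernel dimension
    have hker : LinearMap.ker (Matrix.toLin' (M3 a b n m l n' m')) =
        LinearMap.range (Phi a b) := by
      apply le_antisymm
      · intro w hw
        rw [LinearMap.mem_ker, Matrix.toLin'_apply] at hw
        have Es : ∀ (i : Fin a) (k : Fin 3),
            ![((m i * l i : ℤ) : ℚ), ((n i * l i : ℤ) : ℚ), ((n i * m i : ℤ) : ℚ)] k *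
              w (.inl (.inl k)) + w (.inl (.inr i)) - w (.inr (.inl i)) = 0 := by
          intro i k
          rw [← M3_mulVec_s]
          exact congrFun hw _
        have Et : ∀ (j : Fin b) (k : Fin 2),
            (if k = 0 then -((m' j : ℤ) : ℚ) * w (.inl (.inl 0))
              else ((n' j : ℤ) : ℚ) * w (.inl (.inl 1))) = 0 := by
          intro j k
          rw [← M3_mulVec_t]
          exact congrFun hw _
        have h1 : ∀ i, ((m i : ℚ) * (l i : ℚ)) * w (.inl (.inl 0)) =
            ((n i : ℚ) * (l i : ℚ)) * w (.inl (.inl 1)) := by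
          intro i
          have e0 := Es i 0
          have e1 := Es i 1
          simp only [Matrix.cons_val_zero, Matrix.cons_val_one, Matrix.head_cons] at e0 e1
          push_cast at e0 e1 ⊢
          linear_combination e0 - e1
        have h2 : ∀ i, ((n i : ℚ) * (l i : ℚ)) * w (.inl (.inl 1)) =
            ((n i : ℚ) * (m i : ℚ)) * w (.inl (.inl 2)) := by
          intro i
          have e1 := Es i 1
          have e2 := Es i 2
          simp only [Matrix.cons_val_one, Matrix.head_cons, Matrix.cons_val_two,
            Matrix.tail_cons] at e1 e2
          push_cast at e1 e2 ⊢
          linear_combination e1 - e2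
        have h3 : ∀ j, ((m' j : ℤ) : ℚ) * w (.inl (.inl 0)) = 0 := by
          intro j
          have h := Et j 0
          rw [if_pos rfl] at h
          linear_combination -h
        have h4 : ∀ j, ((n' j : ℤ) : ℚ) * w (.inl (.inl 1)) = 0 := by
          intro j
          have := Et j 1
          simpa using this
        obtain ⟨hX, hY, hZ⟩ := keyXYZ a b n m l n' m' hn hm hl hnm' hspan
          (w (.inl (.inl 0))) (w (.inl (.inl 1))) (w (.inl (.inl 2))) h1 h2 h3 h4
        have hpq : ∀ i : Fin a, w (.inr (.inl i)) = w (.inl (.inr i)) := by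
          intro i
          have e0 := Es i 0
          rw [hX] at e0
          simp only [Matrix.cons_val_zero, mul_zero, zero_add] at e0
          linarith [e0]
        refine ⟨(fun i => w (.inl (.inr i)), fun j => w (.inr (.inr j))), ?_⟩
        funext idx
        rcases idx with (c | i) | (i | j)
        · show (0 : ℚ) = w (.inl (.inl c))
          fin_cases c
          · exact hX.symm
          · exact hY.symm
          · exact hZ.symm
        · rfl
        · exact (hpq i).symm
        · rfl
      · rintro _ ⟨v, rfl⟩
        rw [LinearMap.mem_ker, Matrix.toLin'_apply]
        funext u
        rcases u with u | ⟨⟨i, k⟩ | ⟨j, k⟩⟩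
        · show dotProduct _ _ = _
          simp [M3, dotProduct]
        · rw [M3_mulVec_s]
          show _ * (Phi a b) v (.inl (.inl k)) + (Phi a b) v (.inl (.inr i)) -
            (Phi a b) v (.inr (.inl i)) = (0 : (UIdx a b → ℚ)) _
          simp [Phi]
        · rw [M3_mulVec_t]
          show (if k = 0 then -((m' j : ℤ) : ℚ) * (Phi a b) v (.inl (.inl 0))
            else ((n' j : ℤ) : ℚ) * (Phi a b) v (.inl (.inl 1))) = (0 : (UIdx a b → ℚ)) _
          simp [Phi]
    rw [hker, LinearMap.finrank_range_of_inj (Phi_injective a b),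
      Module.finrank_prod, Module.finrank_pi, Module.finrank_pi,
      Fintype.card_fin, Fintype.card_fin]
end

section
/- With the data and maps D₄, D₃ as in the context, one has a + b ≥ 3 and the quotient ℚ-vector space ker D₃ / range D₄ has dimension a + b − 3. Consequently, the chain complex ℚ →(0) ℚ³ →(D₄) W →(D₃) U, placed in degrees 5, 4, 3, 2 (with zero differential out of degree 5), has homology of rank 1 in degree 5, rank 0 in degree 4, and rank a + b − 3 in degree 3; that is, the link L_x of a point x of the 0-dimensional stratum of a complex 3-dimensional compact toric variety satisfies rk H₅(L_x;ℚ) = 1, rk H₄(L_x;ℚ) = 0, and rk H₃(L_x;ℚ) = f₁ − 3, where f₁ = a + b is the number of 1-dimensional faces of the dual polytope having x as a proper face. -/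
section Aux

variable {a b : ℕ} {n m l : Fin a → ℤ} {n' m' : Fin b → ℤ}

lemma mulVec_M3_w (w : WIdx a b → ℚ) (u : Unit) :
    (M3 a b n m l n' m').mulVec w (.inl u) = 0 := by
  simp [Matrix.mulVec, dotProduct, M3]

lemma mulVec_M3_s (w : WIdx a b → ℚ) (i : Fin a) (k : Fin 3) :
    (M3 a b n m l n' m').mulVec w (.inr (.inl (i, k))) =
      ![((m i * l i : ℤ) : ℚ), ((n i * l i : ℤ) : ℚ), ((n i * m i : ℤ) : ℚ)] k *
        w (.inl (.inl k)) + w (.inl (.inr i)) - w (.inr (.inl i)) := by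
  simp [Matrix.mulVec, dotProduct, Fintype.sum_sum_type, M3, ite_mul, zero_mul,
    Finset.sum_ite_eq', sub_eq_add_neg]

lemma mulVec_M3_t0 (w : WIdx a b → ℚ) (j : Fin b) :
    (M3 a b n m l n' m').mulVec w (.inr (.inr (j, 0))) =
      -((m' j : ℤ) : ℚ) * w (.inl (.inl 0)) := by
  simp [Matrix.mulVec, dotProduct, Fintype.sum_sum_type, M3, Fin.sum_univ_three]

lemma mulVec_M3_t1 (w : WIdx a b → ℚ) (j : Fin b) :
    (M3 a b n m l n' m').mulVec w (.inr (.inr (j, 1))) =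
      ((n' j : ℤ) : ℚ) * w (.inl (.inl 1)) := by
  simp [Matrix.mulVec, dotProduct, Fintype.sum_sum_type, M3, Fin.sum_univ_three]

end Aux


section Aux2
variable {a b : ℕ} {n m l : Fin a → ℤ} {n' m' : Fin b → ℤ}

lemma mulVec_M4_x (v : Fin 3 → ℚ) (c : Fin 3) :
    (M4 a b n m l n' m').mulVec v (.inl (.inl c)) = 0 := by
  simp [Matrix.mulVec, M4]

lemma mulVec_M4_p (v : Fin 3 → ℚ) (i : Fin a) :
    (M4 a b n m l n' m').mulVec v (.inl (.inr i)) =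
      dotProduct ![((n i : ℤ) : ℚ), ((m i : ℤ) : ℚ), ((l i : ℤ) : ℚ)] v := rfl

lemma mulVec_M4_q (v : Fin 3 → ℚ) (i : Fin a) :
    (M4 a b n m l n' m').mulVec v (.inr (.inl i)) =
      dotProduct ![((n i : ℤ) : ℚ), ((m i : ℤ) : ℚ), ((l i : ℤ) : ℚ)] v := rfl

lemma mulVec_M4_r (v : Fin 3 → ℚ) (j : Fin b) :
    (M4 a b n m l n' m').mulVec v (.inr (.inr j)) =
      dotProduct ![((n' j : ℤ) : ℚ), ((m' j : ℤ) : ℚ), 0] v := rfl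

/-- The parametrization of `ker ∂₃`. -/
def Kmap (a b : ℕ) : (Fin a ⊕ Fin b → ℚ) →ₗ[ℚ] (WIdx a b → ℚ) where
  toFun u := fun j =>
    match j with
    | .inl (.inl _) => 0
    | .inl (.inr i) => u (.inl i)
    | .inr (.inl i) => u (.inl i)
    | .inr (.inr j) => u (.inr j)
  map_add' u v := by funext j; rcases j with (c | i) | (i | j) <;> simp
  map_smul' c u := by funext j; rcases j with (c | i) | (i | j) <;> simp

lemma Kmap_inj : Function.Injective (Kmap a b) := by
  intro u v h
  funext s
  rcases s with i | j
  · exact congrFun h (.inl (.inr i))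
  · exact congrFun h (.inr (.inr j))

end Aux2


section Key
variable {a b : ℕ} {n m l : Fin a → ℤ} {n' m' : Fin b → ℤ}

lemma a_pos
    (hspan : Submodule.span ℚ
        ((Set.range fun i => ![((n i : ℤ) : ℚ), ((m i : ℤ) : ℚ), ((l i : ℤ) : ℚ)]) ∪
          (Set.range fun j => ![((n' j : ℤ) : ℚ), ((m' j : ℤ) : ℚ), 0])) = ⊤) :
    0 < a := by
  rcases Nat.eq_zero_or_pos a with h | h
  swap
  · exact h
  exfalso
  subst h
  have hle : Submodule.span ℚ
      ((Set.range fun i : Fin 0 => ![((n i : ℤ) : ℚ), ((m i : ℤ) : ℚ), ((l i : ℤ) : ℚ)]) ∪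
        (Set.range fun j => ![((n' j : ℤ) : ℚ), ((m' j : ℤ) : ℚ), 0])) ≤
      LinearMap.ker (LinearMap.proj (R := ℚ) (φ := fun _ : Fin 3 => ℚ) 2) := by
    rw [Submodule.span_le]
    rintro v (⟨i, rfl⟩ | ⟨j, rfl⟩)
    · exact absurd i.2 (by simp)
    · simp [LinearMap.mem_ker]
  rw [hspan] at hle
  have := hle (Submodule.mem_top (x := Pi.single 2 1))
  simp [LinearMap.mem_ker] at this

lemma xyz_eq_zero (hn : ∀ i, n i ≠ 0) (hm : ∀ i, m i ≠ 0) (hl : ∀ i, l i ≠ 0)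
    (hnm' : ∀ j, ¬(n' j = 0 ∧ m' j = 0))
    (hspan : Submodule.span ℚ
        ((Set.range fun i => ![((n i : ℤ) : ℚ), ((m i : ℤ) : ℚ), ((l i : ℤ) : ℚ)]) ∪
          (Set.range fun j => ![((n' j : ℤ) : ℚ), ((m' j : ℤ) : ℚ), 0])) = ⊤)
    (w : WIdx a b → ℚ) (hw : (M3 a b n m l n' m').mulVec w = 0) (c : Fin 3) :
    w (.inl (.inl c)) = 0 := by
  have ha : 0 < a := a_pos hspan
  set x := w (.inl (.inl 0)) with hxdef
  set y := w (.inl (.inl 1)) with hydef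
  set z := w (.inl (.inl 2)) with hzdef
  -- the three s-equations
  have e1 : ∀ i : Fin a, (m i : ℚ) * (l i : ℚ) * x + w (.inl (.inr i)) - w (.inr (.inl i)) = 0 := by
    intro i
    have := congrFun hw (.inr (.inl (i, 0)))
    rw [mulVec_M3_s] at this
    simpa [Int.cast_mul] using this
  have e2 : ∀ i : Fin a, (n i : ℚ) * (l i : ℚ) * y + w (.inl (.inr i)) - w (.inr (.inl i)) = 0 := by
    intro i
    have := congrFun hw (.inr (.inl (i, 1)))
    rw [mulVec_M3_s] at this
    simpa [Int.cast_mul] using this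
  have e3 : ∀ i : Fin a, (n i : ℚ) * (m i : ℚ) * z + w (.inl (.inr i)) - w (.inr (.inl i)) = 0 := by
    intro i
    have := congrFun hw (.inr (.inl (i, 2)))
    rw [mulVec_M3_s] at this
    simpa [Int.cast_mul] using this
  have hnQ : ∀ i, (n i : ℚ) ≠ 0 := fun i => Int.cast_ne_zero.mpr (hn i)
  have hmQ : ∀ i, (m i : ℚ) ≠ 0 := fun i => Int.cast_ne_zero.mpr (hm i)
  have hlQ : ∀ i, (l i : ℚ) ≠ 0 := fun i => Int.cast_ne_zero.mpr (hl i)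
  -- pairwise consequences
  have exy : ∀ i, (m i : ℚ) * x = (n i : ℚ) * y := by
    intro i
    have h := sub_eq_zero.mpr ((e1 i).trans (e2 i).symm)
    have : (l i : ℚ) * ((m i : ℚ) * x - (n i : ℚ) * y) = 0 := by ring_nf; ring_nf at h; linarith
    rcases mul_eq_zero.mp this with h' | h'
    · exact absurd h' (hlQ i)
    · linarith
  have eyz : ∀ i, (l i : ℚ) * y = (m i : ℚ) * z := by
    intro i
    have h := sub_eq_zero.mpr ((e2 i).trans (e3 i).symm)
    have : (n i : ℚ) * ((l i : ℚ) * y - (m i : ℚ) * z) = 0 := by ring_nf; ring_nf at h; linarith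
    rcases mul_eq_zero.mp this with h' | h'
    · exact absurd h' (hnQ i)
    · linarith
  have exz : ∀ i, (l i : ℚ) * x = (n i : ℚ) * z := by
    intro i
    have h := sub_eq_zero.mpr ((e1 i).trans (e3 i).symm)
    have : (m i : ℚ) * ((l i : ℚ) * x - (n i : ℚ) * z) = 0 := by ring_nf; ring_nf at h; linarith
    rcases mul_eq_zero.mp this with h' | h'
    · exact absurd h' (hmQ i)
    · linarith
  set i0 : Fin a := ⟨0, ha⟩
  by_cases hx : x = 0
  · have hy : y = 0 := by
      have := exy i0
      rw [hx, mul_zero] at this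
      exact (mul_eq_zero.mp this.symm).resolve_left (hnQ i0)
    have hz : z = 0 := by
      have := eyz i0
      rw [hy, mul_zero] at this
      exact (mul_eq_zero.mp this.symm).resolve_left (hmQ i0)
    fin_cases c
    · exact hx
    · exact hy
    · exact hz
  · exfalso
    have hy : y ≠ 0 := by
      intro hy
      apply hx
      have := exy i0
      rw [hy, mul_zero] at this
      exact (mul_eq_zero.mp this).resolve_left (hmQ i0)
    set X : Fin 3 → ℚ := fun c => w (.inl (.inl c)) with hXdef
    have hXx : X 0 = x := rfl
    have hXy : X 1 = y := rfl
    have hXz : X 2 = z := rfl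
    have hle : Submodule.span ℚ
        ((Set.range fun i => ![((n i : ℤ) : ℚ), ((m i : ℤ) : ℚ), ((l i : ℤ) : ℚ)]) ∪
          (Set.range fun j => ![((n' j : ℤ) : ℚ), ((m' j : ℤ) : ℚ), 0])) ≤
        Submodule.span ℚ {X} := by
      rw [Submodule.span_le]
      rintro v (⟨i, rfl⟩ | ⟨j, rfl⟩)
      · rw [SetLike.mem_coe, Submodule.mem_span_singleton]
        refine ⟨(n i : ℚ) / x, ?_⟩
        funext c
        fin_cases c
        · show (n i : ℚ) / x * X 0 = (n i : ℚ)
          rw [hXx]; field_simp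
        · show (n i : ℚ) / x * X 1 = (m i : ℚ)
          rw [hXy]
          field_simp
          have := exy i
          linarith
        · show (n i : ℚ) / x * X 2 = (l i : ℚ)
          rw [hXz]
          field_simp
          have := exz i
          linarith
      · exfalso
        apply hnm' j
        have h4 : -((m' j : ℤ) : ℚ) * x = 0 := by
          have := congrFun hw (.inr (.inr (j, 0)))
          rwa [mulVec_M3_t0] at this
        have h5 : ((n' j : ℤ) : ℚ) * y = 0 := by
          have := congrFun hw (.inr (.inr (j, 1)))
          rwa [mulVec_M3_t1] at this
        constructor
        · have : ((n' j : ℤ) : ℚ) = 0 := (mul_eq_zero.mp h5).resolve_right hy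
          exact_mod_cast this
        · have : -((m' j : ℤ) : ℚ) = 0 := (mul_eq_zero.mp h4).resolve_right hx
          have : ((m' j : ℤ) : ℚ) = 0 := by linarith
          exact_mod_cast this
    rw [hspan] at hle
    have hmem := hle (Submodule.mem_top (x := Pi.single (0 : Fin 3) (1 : ℚ)))
    rw [Submodule.mem_span_singleton] at hmem
    obtain ⟨c, hc⟩ := hmem
    have hc1 : c * y = 0 := by
      have := congrFun hc 1
      simpa [hXy] using this
    have hc0 : c * x = 1 := by
      have := congrFun hc 0
      simpa [hXx] using this
    rcases mul_eq_zero.mp hc1 with h | h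
    · rw [h, zero_mul] at hc0; exact one_ne_zero hc0.symm
    · exact hy h

end Key

section Key2
variable {a b : ℕ} {n m l : Fin a → ℤ} {n' m' : Fin b → ℤ}

lemma mulVec_M3_M4 (v : Fin 3 → ℚ) :
    (M3 a b n m l n' m').mulVec ((M4 a b n m l n' m').mulVec v) = 0 := by
  funext u
  rcases u with u | (⟨i, k⟩ | ⟨j, k⟩)
  · exact mulVec_M3_w _ u
  · rw [mulVec_M3_s]
    rw [mulVec_M4_x, mulVec_M4_p, mulVec_M4_q]
    simp
  · fin_cases k
    · show (M3 a b n m l n' m').mulVec ((M4 a b n m l n' m').mulVec v) (.inr (.inr (j, 0))) = _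
      rw [mulVec_M3_t0, mulVec_M4_x, mul_zero]; rfl
    · show (M3 a b n m l n' m').mulVec ((M4 a b n m l n' m').mulVec v) (.inr (.inr (j, 1))) = _
      rw [mulVec_M3_t1, mulVec_M4_x, mul_zero]; rfl

lemma ker_M3_eq (hn : ∀ i, n i ≠ 0) (hm : ∀ i, m i ≠ 0) (hl : ∀ i, l i ≠ 0)
    (hnm' : ∀ j, ¬(n' j = 0 ∧ m' j = 0))
    (hspan : Submodule.span ℚ
        ((Set.range fun i => ![((n i : ℤ) : ℚ), ((m i : ℤ) : ℚ), ((l i : ℤ) : ℚ)]) ∪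
          (Set.range fun j => ![((n' j : ℤ) : ℚ), ((m' j : ℤ) : ℚ), 0])) = ⊤) :
    LinearMap.ker (Matrix.toLin' (M3 a b n m l n' m')) = LinearMap.range (Kmap a b) := by
  ext w
  rw [LinearMap.mem_ker, Matrix.toLin'_apply, LinearMap.mem_range]
  constructor
  · intro hw
    have hxyz := xyz_eq_zero hn hm hl hnm' hspan w hw
    have hPQ : ∀ i : Fin a, w (.inr (.inl i)) = w (.inl (.inr i)) := by
      intro i
      have := congrFun hw (.inr (.inl (i, 0)))
      rw [mulVec_M3_s, hxyz 0, mul_zero, zero_add, Pi.zero_apply] at this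
      linarith
    refine ⟨fun s => match s with
      | .inl i => w (.inl (.inr i))
      | .inr j => w (.inr (.inr j)), ?_⟩
    funext j
    rcases j with (c | i) | (i | j)
    · exact (hxyz c).symm
    · rfl
    · exact (hPQ i).symm
    · rfl
  · rintro ⟨u, rfl⟩
    funext j
    rcases j with u' | (⟨i, k⟩ | ⟨j, k⟩)
    · exact mulVec_M3_w _ u'
    · rw [mulVec_M3_s]
      show _ * (0:ℚ) + u (.inl i) - u (.inl i) = _
      simp
    · fin_cases k
      · show (M3 a b n m l n' m').mulVec (Kmap a b u) (.inr (.inr (j, 0))) = _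
        rw [mulVec_M3_t0]
        show _ * (0:ℚ) = _
        rw [mul_zero]; rfl
      · show (M3 a b n m l n' m').mulVec (Kmap a b u) (.inr (.inr (j, 1))) = _
        rw [mulVec_M3_t1]
        show _ * (0:ℚ) = _
        rw [mul_zero]; rfl

lemma ker_M4_eq
    (hspan : Submodule.span ℚ
        ((Set.range fun i => ![((n i : ℤ) : ℚ), ((m i : ℤ) : ℚ), ((l i : ℤ) : ℚ)]) ∪
          (Set.range fun j => ![((n' j : ℤ) : ℚ), ((m' j : ℤ) : ℚ), 0])) = ⊤) :
    LinearMap.ker (Matrix.toLin' (M4 a b n m l n' m')) = ⊥ := by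
  rw [eq_bot_iff]
  intro v hv
  rw [LinearMap.mem_ker, Matrix.toLin'_apply] at hv
  have hdot : ∀ u ∈ ((Set.range fun i => ![((n i : ℤ) : ℚ), ((m i : ℤ) : ℚ), ((l i : ℤ) : ℚ)]) ∪
      (Set.range fun j => ![((n' j : ℤ) : ℚ), ((m' j : ℤ) : ℚ), 0])),
      dotProduct u v = 0 := by
    rintro u (⟨i, rfl⟩ | ⟨j, rfl⟩)
    · rw [← mulVec_M4_p (n := n) (m := m) (l := l) (n' := n') (m' := m') v i, hv]; rfl
    · rw [← mulVec_M4_r (n := n) (m := m) (l := l) (n' := n') (m' := m') v j, hv]; rfl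
  have hv' : dotProduct v v = 0 := by
    have hmem : v ∈ Submodule.span ℚ
        ((Set.range fun i => ![((n i : ℤ) : ℚ), ((m i : ℤ) : ℚ), ((l i : ℤ) : ℚ)]) ∪
          (Set.range fun j => ![((n' j : ℤ) : ℚ), ((m' j : ℤ) : ℚ), 0])) := by
      rw [hspan]; exact Submodule.mem_top
    refine Submodule.span_induction (p := fun u _ => dotProduct u v = 0)
      hdot ?_ ?_ ?_ hmem
    · exact zero_dotProduct v
    · intro u1 u2 _ _ h1 h2
      rw [add_dotProduct, h1, h2, add_zero]
    · intro c u _ h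
      rw [smul_dotProduct, h, smul_zero]
  simpa using dotProduct_self_eq_zero.mp hv'

end Key2

set_option synthInstance.maxHeartbeats 1000000 in
set_option maxHeartbeats 2000000 in
/-- With `∂₄` and `∂₃` the cellular boundary operators, one has `a + b ≥ 3` and
`dim (ker ∂₃ / im ∂₄) = a + b − 3`.  Consequently the chain complex
`ℚ → ℚ³ → W → U` in degrees `5, 4, 3, 2` (with zero differential out of degree 5)
has homology of rank `1` in degree `5`, `0` in degree `4`, and `a + b − 3 = f₁ − 3`
in degree `3`: the link of a point of the 0-dimensional stratum of a complex
3-dimensional compact toric variety satisfies `rk H₅ = 1`, `rk H₄ = 0`,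
`rk H₃ = f₁ − 3`. -/
theorem stmt7 (a b : ℕ) (n m l : Fin a → ℤ) (n' m' : Fin b → ℤ)
    (hn : ∀ i, n i ≠ 0) (hm : ∀ i, m i ≠ 0) (hl : ∀ i, l i ≠ 0)
    (hnm' : ∀ j, ¬(n' j = 0 ∧ m' j = 0))
    (hspan : Submodule.span ℚ
        ((Set.range fun i => ![((n i : ℤ) : ℚ), ((m i : ℤ) : ℚ), ((l i : ℤ) : ℚ)]) ∪
          (Set.range fun j => ![((n' j : ℤ) : ℚ), ((m' j : ℤ) : ℚ), 0])) = ⊤) :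
    3 ≤ a + b ∧
    -- rank of the homology in degree 5: the kernel of the zero differential on `ℚ`
    Module.finrank ℚ (LinearMap.ker (0 : ℚ →ₗ[ℚ] (Fin 3 → ℚ))) = 1 ∧
    -- rank of the homology in degree 4: `ker ∂₄` (the incoming differential is zero)
    Module.finrank ℚ (LinearMap.ker (Matrix.toLin' (M4 a b n m l n' m'))) = 0 ∧
    -- rank of the homology in degree 3: `ker ∂₃ / im ∂₄`
    Module.finrank ℚ
      (LinearMap.ker (Matrix.toLin' (M3 a b n m l n' m')) ⧸
        (LinearMap.range (Matrix.toLin' (M4 a b n m l n' m'))).comap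
          (LinearMap.ker (Matrix.toLin' (M3 a b n m l n' m'))).subtype)
      = a + b - 3 := by
  set F3 := Matrix.toLin' (M3 a b n m l n' m') with hF3
  set F4 := Matrix.toLin' (M4 a b n m l n' m') with hF4
  have hker4 : LinearMap.ker F4 = ⊥ := ker_M4_eq hspan
  have hker3 : LinearMap.ker F3 = LinearMap.range (Kmap a b) :=
    ker_M3_eq hn hm hl hnm' hspan
  have hrange4 : Module.finrank ℚ (LinearMap.range F4) = 3 := by
    have h := LinearMap.finrank_range_add_finrank_ker F4
    rw [hker4, finrank_bot, add_zero] at h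
    simpa [Module.finrank_pi] using h
  have hker3rank : Module.finrank ℚ (LinearMap.ker F3) = a + b := by
    rw [hker3, LinearMap.finrank_range_of_inj Kmap_inj]
    simp [Module.finrank_pi]
  have hle : LinearMap.range F4 ≤ LinearMap.ker F3 := by
    rintro _ ⟨v, rfl⟩
    rw [LinearMap.mem_ker, hF3, hF4, Matrix.toLin'_apply, Matrix.toLin'_apply]
    exact mulVec_M3_M4 v
  set N := (LinearMap.range F4).comap (LinearMap.ker F3).subtype with hNdef
  have hNrank : Module.finrank ℚ N = 3 := by
    rw [(Submodule.comapSubtypeEquivOfLe hle).finrank_eq, hrange4]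
  have hq := Submodule.finrank_quotient_add_finrank N
  have hNle := Submodule.finrank_le N
  rw [hNrank, hker3rank] at hNle
  refine ⟨hNle, ?_, ?_, ?_⟩
  · rw [LinearMap.ker_zero, finrank_top]
    exact Module.finrank_self ℚ
  · rw [hker4, finrank_bot]
  · rw [hker3rank, hNrank] at hq
    omega
end

section
/- With the data and maps D₄, D₃ as in the context, let W' ⊆ W be the ℚ-linear span of the basis vectors x, y, z, p_1,…,p_a, and let D₃' : W' → U be the restriction of D₃ to W' (equivalently, the matrix obtained from D₃ by deleting the columns indexed by q_1,…,q_a and r_1,…,r_b). Then D₃' is injective and range D₃' = range D₃. (This is the key step showing that the 5-dimensional link of a point of the 0-dimensional stratum of a complex 3-dimensional toric variety is rationally 3-segmented: the subcomplex obtained by deleting one 2-cell from each 2-torus has the same homology as the link in degrees ≤ 2 and vanishing homology in degrees ≥ 3.) -/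

lemma phi_span_ne_top (c : Fin 3 → ℚ) (S : Set (Fin 3 → ℚ))
    (h : ∀ g ∈ S, c 0 * g 0 + c 1 * g 1 + c 2 * g 2 = 0)
    (k : Fin 3) (hk : c k ≠ 0) : Submodule.span ℚ S ≠ ⊤ := by
  intro htop
  set φ : (Fin 3 → ℚ) →ₗ[ℚ] ℚ :=
    c 0 • LinearMap.proj 0 + c 1 • LinearMap.proj 1 + c 2 • LinearMap.proj 2 with hφ
  have hle : Submodule.span ℚ S ≤ LinearMap.ker φ := by
    rw [Submodule.span_le]
    intro g hg
    simpa [φ] using h g hg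
  rw [htop] at hle
  have h1 := hle (Submodule.mem_top (x := Pi.single k (1:ℚ)))
  apply hk
  simp only [LinearMap.mem_ker, hφ, LinearMap.add_apply, LinearMap.smul_apply,
    LinearMap.proj_apply, smul_eq_mul] at h1
  fin_cases k <;> simpa [Pi.single_apply] using h1

/-- projection matrix sending (x,y,z,p,q,r) to (x,y,z,p-q) -/
def Pmat (a b : ℕ) : Matrix (Fin 3 ⊕ Fin a) (WIdx a b) ℚ := fun c j =>
  match c, j with
  | Sum.inl c, Sum.inl (Sum.inl c') => if c' = c then 1 else 0
  | Sum.inr i, Sum.inl (Sum.inr i') => if i' = i then 1 else 0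
  | Sum.inr i, Sum.inr (Sum.inl i') => if i' = i then -1 else 0
  | _, _ => 0

/-- inclusion matrix -/
def Emat (a b : ℕ) : Matrix (WIdx a b) (Fin 3 ⊕ Fin a) ℚ :=
  (1 : Matrix (WIdx a b) (WIdx a b) ℚ).submatrix id Sum.inl

lemma hBE (a b : ℕ) (n m l : Fin a → ℤ) (n' m' : Fin b → ℤ) :
    (M3 a b n m l n' m').submatrix id (Sum.inl : Fin 3 ⊕ Fin a → WIdx a b)
      = M3 a b n m l n' m' * Emat a b := by
  ext u c
  simp [Emat, Matrix.mul_apply, Matrix.one_apply]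

lemma hAP (a b : ℕ) (n m l : Fin a → ℤ) (n' m' : Fin b → ℤ) :
    M3 a b n m l n' m'
      = ((M3 a b n m l n' m').submatrix id (Sum.inl : Fin 3 ⊕ Fin a → WIdx a b)) * Pmat a b := by
  ext u j
  rcases u with u | u
  · rcases j with (j|j)|(j|j) <;>
      simp [M3, Pmat, Matrix.mul_apply, Fintype.sum_sum_type]
  rcases u with ⟨i, k⟩ | ⟨jj, k⟩ <;>
    rcases j with (j|j)|(j|j) <;>
      simp [M3, Pmat, Matrix.mul_apply, Fintype.sum_sum_type, Finset.sum_ite_eq',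
        ite_and, Finset.mul_sum] <;> split_ifs <;> simp

/-- Let `W' ⊆ W` be the span of the basis vectors `x, y, z, p_1, …, p_a`, and let
`∂₃' : W' → U` be the restriction of `∂₃` (the matrix obtained from `∂₃` by deleting
the columns indexed by `q_1, …, q_a` and `r_1, …, r_b`).  Then `∂₃'` is injective and
has the same range as `∂₃`.  (Key step showing that the 5-dimensional link of a point
of the 0-dimensional stratum of a complex 3-dimensional toric variety is rationally
3-segmented.) -/
theorem stmt8 (a b : ℕ) (n m l : Fin a → ℤ) (n' m' : Fin b → ℤ)
    (hn : ∀ i, n i ≠ 0) (hm : ∀ i, m i ≠ 0) (hl : ∀ i, l i ≠ 0)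
    (hnm' : ∀ j, ¬(n' j = 0 ∧ m' j = 0))
    (hspan : Submodule.span ℚ
        ((Set.range fun i => ![((n i : ℤ) : ℚ), ((m i : ℤ) : ℚ), ((l i : ℤ) : ℚ)]) ∪
          (Set.range fun j => ![((n' j : ℤ) : ℚ), ((m' j : ℤ) : ℚ), 0])) = ⊤) :
    Function.Injective
      (Matrix.toLin' ((M3 a b n m l n' m').submatrix id (Sum.inl : Fin 3 ⊕ Fin a → WIdx a b))) ∧
    LinearMap.range
        (Matrix.toLin' ((M3 a b n m l n' m').submatrix id (Sum.inl : Fin 3 ⊕ Fin a → WIdx a b))) =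
      LinearMap.range (Matrix.toLin' (M3 a b n m l n' m')) := by
  constructor
  · rw [← LinearMap.ker_eq_bot, LinearMap.ker_eq_bot']
    intro v hv
    have hco : ∀ u, ((M3 a b n m l n' m').submatrix id
        (Sum.inl : Fin 3 ⊕ Fin a → WIdx a b)).mulVec v u = 0 := by
      intro u; rw [← Matrix.toLin'_apply, hv]; rfl
    set vx := v (Sum.inl 0) with hvx0
    set vy := v (Sum.inl 1) with hvy0
    set vz := v (Sum.inl 2) with hvz0
    have h1 : ∀ i : Fin a, ((m i : ℚ)) * ((l i : ℚ)) * vx + v (Sum.inr i) = 0 := by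
      intro i
      have := hco (Sum.inr (Sum.inl (i, 0)))
      simp [Matrix.mulVec, dotProduct, M3, Fintype.sum_sum_type, ite_mul,
        Fin.sum_univ_three] at this
      push_cast at this
      linarith [this]
    have h2 : ∀ i : Fin a, ((n i : ℚ)) * ((l i : ℚ)) * vy + v (Sum.inr i) = 0 := by
      intro i
      have := hco (Sum.inr (Sum.inl (i, 1)))
      simp [Matrix.mulVec, dotProduct, M3, Fintype.sum_sum_type, ite_mul,
        Fin.sum_univ_three] at this
      push_cast at this
      linarith [this]
    have h3 : ∀ i : Fin a, ((n i : ℚ)) * ((m i : ℚ)) * vz + v (Sum.inr i) = 0 := by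
      intro i
      have := hco (Sum.inr (Sum.inl (i, 2)))
      simp [Matrix.mulVec, dotProduct, M3, Fintype.sum_sum_type, ite_mul,
        Fin.sum_univ_three] at this
      push_cast at this
      linarith [this]
    have ht1 : ∀ j : Fin b, ((m' j : ℚ)) * vx = 0 := by
      intro j
      have := hco (Sum.inr (Sum.inr (j, 0)))
      simp [Matrix.mulVec, dotProduct, M3, Fintype.sum_sum_type, ite_mul,
        Fin.sum_univ_three] at this
      rcases this with h | h
      · simp [h]
      · simp [hvx0, h]
    have ht2 : ∀ j : Fin b, ((n' j : ℚ)) * vy = 0 := by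
      intro j
      have := hco (Sum.inr (Sum.inr (j, 1)))
      simp [Matrix.mulVec, dotProduct, M3, Fintype.sum_sum_type, ite_mul,
        Fin.sum_univ_three] at this
      rcases this with h | h
      · simp [h]
      · simp [hvy0, h]
    have hmQ : ∀ i, ((m i : ℚ)) ≠ 0 := fun i => Int.cast_ne_zero.mpr (hm i)
    have hnQ : ∀ i, ((n i : ℚ)) ≠ 0 := fun i => Int.cast_ne_zero.mpr (hn i)
    have hlQ : ∀ i, ((l i : ℚ)) ≠ 0 := fun i => Int.cast_ne_zero.mpr (hl i)
    have ha : Nonempty (Fin a) := by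
      by_contra hA
      rw [not_nonempty_iff] at hA
      refine phi_span_ne_top ![0, 0, 1] _ ?_ 2 (by simp) hspan
      rintro g (⟨i, rfl⟩ | ⟨j, rfl⟩)
      · exact hA.elim i
      · simp
    obtain ⟨i0⟩ := ha
    have key1 : ∀ i, ((m i : ℚ)) * vx = ((n i : ℚ)) * vy := by
      intro i
      apply mul_left_cancel₀ (hlQ i)
      linear_combination h1 i - h2 i
    have key2 : ∀ i, ((l i : ℚ)) * vx = ((n i : ℚ)) * vz := by
      intro i
      apply mul_left_cancel₀ (hmQ i)
      linear_combination h1 i - h3 i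
    have hx : vx = 0 := by
      by_contra hvx
      have hvy : vy ≠ 0 := by
        intro h0
        have := key1 i0
        rw [h0, mul_zero] at this
        exact (mul_ne_zero (hmQ i0) hvx) this
      cases isEmpty_or_nonempty (Fin b) with
      | inr hb =>
        obtain ⟨j⟩ := hb
        have hm' : m' j = 0 := by
          have := ht1 j
          rcases mul_eq_zero.mp this with h | h
          · exact_mod_cast h
          · exact absurd h hvx
        have hn' : n' j = 0 := by
          have := ht2 j
          rcases mul_eq_zero.mp this with h | h
          · exact_mod_cast h
          · exact absurd h hvy
        exact hnm' j ⟨hn', hm'⟩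
      | inl hb =>
        refine phi_span_ne_top ![vy, -vx, 0] _ ?_ 1 (by simpa using hvx) hspan
        rintro g (⟨i, rfl⟩ | ⟨j, rfl⟩)
        · simp only [Matrix.cons_val_zero, Matrix.cons_val_one, Matrix.head_cons,
            Matrix.cons_val_two, Matrix.tail_cons]
          linarith [key1 i]
        · exact hb.elim j
    have hy : vy = 0 := by
      have := key1 i0
      rw [hx, mul_zero] at this
      exact (mul_eq_zero.mp this.symm).resolve_left (hnQ i0)
    have hz : vz = 0 := by
      have := key2 i0
      rw [hx, mul_zero] at this
      exact (mul_eq_zero.mp this.symm).resolve_left (hnQ i0)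
    funext c
    rcases c with c | i
    · fin_cases c
      · exact hx
      · exact hy
      · exact hz
    · have := h1 i
      rw [hx, mul_zero, zero_add] at this
      simpa using this
  · apply le_antisymm
    · rw [hBE, Matrix.toLin'_mul]
      exact LinearMap.range_comp_le_range _ _
    · conv_lhs => rw [hAP a b n m l n' m']
      rw [Matrix.toLin'_mul]
      exact LinearMap.range_comp_le_range _ _
end
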